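/- (Lemma 1: input-to-state stability of the observation error subsystem.) Let n ≥ 1, let A = A_{n+1} be the (n+1)×(n+1) upper shift matrix, c the first standard basis vector, b the last standard basis vector, and for ω_o > 1 let l ∈ ℝ^{n+1} have entries l_i = binom(n+1, i)·ω_o^i. Then there exist constants c₁, c₂, c₃, c₄ > 0 such that for all r_ḋ, r_w > 0, for every differentiable function z̃ : ℝ → ℝ^{n+1} and all functions ḋ, w : ℝ → ℝ satisfying, for all t ≥ 0, z̃′(t) = (A − l·c^⊤)·z̃(t) + ḋ(t)·b − w(t)·l, |ḋ(t)| ≤ r_ḋ, and |w(t)| ≤ r_w, the following bound holds for all t ≥ 0: ‖z̃(t)‖ ≤ ω_o^n·c₁·‖z̃(0)‖·exp(−c₂·ω_o·t) + (1/ω_o)·c₃·(r_ḋ + ω_o^{n+1}·c₄·r_w), where ‖·‖ is the Euclidean norm on ℝ^{n+1}. -/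

import Mathlib

set_option synthInstance.maxHeartbeats 1000000
set_option maxHeartbeats 1000000

open Matrix

/-- The `m × m` upper shift matrix: ones on the superdiagonal, zeros elsewhere. -/
noncomputable def shiftMat (m : ℕ) : Matrix (Fin m) (Fin m) ℝ :=
  Matrix.of fun i j => if (i : ℕ) + 1 = (j : ℕ) then 1 else 0

/-- The first standard basis vector of `ℝ^m`. -/
noncomputable def firstBasis (m : ℕ) : Fin m → ℝ :=
  fun i => if (i : ℕ) = 0 then 1 else 0

/-- The last standard basis vector of `ℝ^m`. -/
noncomputable def lastBasis (m : ℕ) : Fin m → ℝ :=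
  fun i => if (i : ℕ) = m - 1 then 1 else 0

/-- Bandwidth-parametrized observer gain: `l_i = binom(n+1, i)·ω_o^i` for `i = 1,…,n+1`. -/
noncomputable def obsGain (m : ℕ) (ω : ℝ) : Fin m → ℝ :=
  fun i => (m.choose ((i : ℕ) + 1)) * ω ^ ((i : ℕ) + 1)

/-! ### Auxiliary algebraic layer -/

noncomputable def Sv (m : ℕ) (ω : ℝ) (x y : ℕ) : ℝ :=
  if y ≤ x then ((m - 1 - y).choose (x - y)) * ω ^ (x - y) else 0

lemma key_entry (m a b : ℕ) (ha : a < m) (hb : b < m) (ω : ℝ) :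
    (if a + 1 < m then Sv m ω (a+1) b else 0)
      - ((m.choose (a+1) : ℝ) * ω ^ (a+1)) * Sv m ω 0 b + ω * Sv m ω a b
    = (if 1 ≤ b then Sv m ω a (b-1) else 0) := by
  simp only [Sv]
  split_ifs with h1 h2 h3 h4 h5 h6 <;> try (exfalso; omega)
  · -- b = 0, a+1 < m
    have hb0 : b = 0 := by omega
    subst hb0
    simp only [Nat.sub_zero, Nat.choose_zero_right, Nat.cast_one, one_mul, pow_zero, mul_one]
    have hP : m.choose (a+1) = (m-1).choose a + (m-1).choose (a+1) := by
      conv_lhs => rw [show m = (m-1)+1 by omega]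
      exact Nat.choose_succ_succ (m-1) a
    rw [hP]; push_cast; ring
  · -- 1 ≤ b ≤ a, a+1 < m : main Pascal
    rw [show a+1-b = (a-b)+1 by omega, show m-1-(b-1) = (m-1-b)+1 by omega,
      show a-(b-1) = (a-b)+1 by omega, Nat.choose_succ_succ]
    push_cast; ring
  · -- b = a+1
    rw [show a+1-b = 0 by omega, show a-(b-1) = 0 by omega, Nat.choose_zero_right,
      Nat.choose_zero_right]
    norm_num
  · ring
  · -- a = m-1, b = 0
    have hb0 : b = 0 := by omega
    subst hb0
    simp only [Nat.sub_zero, Nat.choose_zero_right, Nat.cast_one, pow_zero, mul_one, one_mul]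
    rw [show m.choose (a+1) = 1 by rw [show a+1 = m by omega]; exact Nat.choose_self m,
      show (m-1).choose a = 1 by rw [show m-1 = a by omega]; exact Nat.choose_self a]
    push_cast; ring
  · -- a = m-1, 1 ≤ b ≤ a
    rw [show m-1-b = a-b by omega, Nat.choose_self, show m-1-(b-1) = (a-b)+1 by omega,
      show a-(b-1) = (a-b)+1 by omega, Nat.choose_self]
    push_cast; ring

noncomputable def Smat (m : ℕ) (ω : ℝ) : Matrix (Fin m) (Fin m) ℝ :=
  Matrix.of fun i j => Sv m ω (i : ℕ) (j : ℕ)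

lemma fin_sum_delta_nat {m : ℕ} (c : ℕ) (f : Fin m → ℝ) :
    (∑ k : Fin m, (if c = (k : ℕ) then (1:ℝ) else 0) * f k)
      = if h : c < m then f ⟨c, h⟩ else 0 := by
  split_ifs with h
  · have e : ∀ k : Fin m, (c = (k : ℕ)) = ((⟨c, h⟩ : Fin m) = k) := by
      intro k; simp [Fin.ext_iff]
    simp_rw [e]
    simp [ite_mul]
  · have e : ∀ k : Fin m, ¬(c = (k : ℕ)) := by
      intro k hk; exact h (hk ▸ k.isLt)
    simp [e]

lemma fin_sum_delta_nat' {m : ℕ} (c : ℕ) (f : Fin m → ℝ) :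
    (∑ k : Fin m, f k * (if (k : ℕ) = c then (1:ℝ) else 0))
      = if h : c < m then f ⟨c, h⟩ else 0 := by
  rw [← fin_sum_delta_nat c f]
  congr 1; ext k
  rw [mul_comm]; congr 1
  simp [eq_comm]

lemma NS_eq_SA (m : ℕ) (hm : 0 < m) (ω : ℝ) :
    (shiftMat m - Matrix.vecMulVec (obsGain m ω) (firstBasis m) + ω • 1) * Smat m ω
      = Smat m ω * shiftMat m := by
  ext i j
  rw [mul_apply, mul_apply]
  simp only [Matrix.sub_apply, Matrix.add_apply, Matrix.smul_apply, one_apply, shiftMat, of_apply,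
    vecMulVec_apply, firstBasis, obsGain, Smat, smul_eq_mul, sub_mul, add_mul,
    Finset.sum_sub_distrib, Finset.sum_add_distrib]
  have T1 : (∑ k : Fin m, (if (i:ℕ)+1 = (k:ℕ) then (1:ℝ) else 0) * Sv m ω (k:ℕ) (j:ℕ))
      = if (i:ℕ)+1 < m then Sv m ω ((i:ℕ)+1) (j:ℕ) else 0 := by
    rw [fin_sum_delta_nat ((i:ℕ)+1) (fun k => Sv m ω (k:ℕ) (j:ℕ))]
    split_ifs <;> rfl
  have T2 : (∑ k : Fin m, ((m.choose ((i:ℕ)+1) : ℝ) * ω ^ ((i:ℕ)+1))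
        * (if (k:ℕ) = 0 then (1:ℝ) else 0) * Sv m ω (k:ℕ) (j:ℕ))
      = ((m.choose ((i:ℕ)+1) : ℝ) * ω ^ ((i:ℕ)+1)) * Sv m ω 0 (j:ℕ) := by
    rw [show (∑ k : Fin m, ((m.choose ((i:ℕ)+1) : ℝ) * ω ^ ((i:ℕ)+1))
        * (if (k:ℕ) = 0 then (1:ℝ) else 0) * Sv m ω (k:ℕ) (j:ℕ))
      = ((m.choose ((i:ℕ)+1) : ℝ) * ω ^ ((i:ℕ)+1)) *
        ∑ k : Fin m, (Sv m ω (k:ℕ) (j:ℕ)) * (if (k:ℕ) = 0 then (1:ℝ) else 0) by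
        rw [Finset.mul_sum]; congr 1; ext k; ring]
    rw [fin_sum_delta_nat' 0 (fun k => Sv m ω (k:ℕ) (j:ℕ)), dif_pos hm]
  have T3 : (∑ k : Fin m, ω * (if i = k then (1:ℝ) else 0) * Sv m ω (k:ℕ) (j:ℕ))
      = ω * Sv m ω (i:ℕ) (j:ℕ) := by
    simp [mul_assoc, ite_mul, ← Finset.mul_sum]
  have T4 : (∑ k : Fin m, Sv m ω (i:ℕ) (k:ℕ) * (if (k:ℕ)+1 = (j:ℕ) then (1:ℝ) else 0))
      = if 1 ≤ (j:ℕ) then Sv m ω (i:ℕ) ((j:ℕ)-1) else 0 := by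
    by_cases hj : 1 ≤ (j:ℕ)
    · rw [if_pos hj]
      have e : ∀ k : Fin m, ((k:ℕ)+1 = (j:ℕ)) = ((k:ℕ) = (j:ℕ)-1) := by
        intro k; simp only [eq_iff_iff]; omega
      simp_rw [e]
      rw [fin_sum_delta_nat' ((j:ℕ)-1) (fun k => Sv m ω (i:ℕ) (k:ℕ)),
        dif_pos (by omega : (j:ℕ)-1 < m)]
    · rw [if_neg hj]
      have e : ∀ k : Fin m, ¬((k:ℕ)+1 = (j:ℕ)) := by intro k; omega
      simp [e]
  rw [T1, T2, T3, T4]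
  have := key_entry m (i:ℕ) (j:ℕ) i.isLt j.isLt ω
  rw [← this]

lemma shift_pow_apply (m k : ℕ) (i j : Fin m) :
    (shiftMat m ^ k) i j = if (i:ℕ) + k = (j:ℕ) then 1 else 0 := by
  induction k generalizing j with
  | zero => simp [one_apply, Fin.ext_iff, eq_comm]
  | succ k ih =>
    rw [pow_succ, mul_apply]
    simp_rw [ih]
    have : (∑ l : Fin m, (if (i:ℕ)+k = (l:ℕ) then (1:ℝ) else 0) * shiftMat m l j)
        = if h : (i:ℕ)+k < m then shiftMat m ⟨(i:ℕ)+k, h⟩ j else 0 :=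
      fin_sum_delta_nat ((i:ℕ)+k) (fun l => shiftMat m l j)
    rw [this]
    split_ifs with h h2 h3 <;> simp_all [shiftMat] <;> omega

lemma shift_pow_m (m : ℕ) : (shiftMat m) ^ m = 0 := by
  ext i j
  rw [shift_pow_apply]
  simp only [Matrix.zero_apply, ite_eq_right_iff]
  intro h
  exact absurd h (by have := j.isLt; have := i.isLt; omega)

lemma Smat_det (m : ℕ) (ω : ℝ) : (Smat m ω).det = 1 := by
  rw [Matrix.det_of_lowerTriangular (Smat m ω)
    (by intro i j hij; simp only [Smat, of_apply, Sv]
        rw [if_neg]; exact fun h => absurd h (by have : (i:ℕ) < j := hij; omega))]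
  apply Finset.prod_eq_one
  intro i _
  simp [Smat, Sv]

lemma N_nilpotent (m : ℕ) (hm : 0 < m) (ω : ℝ) :
    (shiftMat m - Matrix.vecMulVec (obsGain m ω) (firstBasis m) + ω • 1) ^ m = 0 := by
  set N := shiftMat m - Matrix.vecMulVec (obsGain m ω) (firstBasis m) + ω • 1 with hN
  have key : ∀ k : ℕ, N ^ k * Smat m ω = Smat m ω * (shiftMat m) ^ k := by
    intro k
    induction k with
    | zero => simp
    | succ k ih =>
      rw [pow_succ, pow_succ, ← Matrix.mul_assoc, ← ih]
      rw [Matrix.mul_assoc, Matrix.mul_assoc, NS_eq_SA m hm ω]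
  have h0 : N ^ m * Smat m ω = 0 := by rw [key m, shift_pow_m, Matrix.mul_zero]
  have hu : IsUnit (Smat m ω).det := by rw [Smat_det]; exact isUnit_one
  calc N ^ m = N ^ m * (Smat m ω * (Smat m ω)⁻¹) := by
        rw [Matrix.mul_nonsing_inv _ hu, Matrix.mul_one]
    _ = (N ^ m * Smat m ω) * (Smat m ω)⁻¹ := by rw [Matrix.mul_assoc]
    _ = 0 := by rw [h0, Matrix.zero_mul]

/-! ### Analytic layer -/

open NormedSpace intervalIntegral MeasureTheory

noncomputable instance clmNormedAlgebraRat {E : Type*} [NormedAddCommGroup E] [NormedSpace ℝ E] :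
    NormedAlgebra ℚ (E →L[ℝ] E) :=
  NormedAlgebra.restrictScalars ℚ ℝ (E →L[ℝ] E)

lemma clm_nilpotent {m : ℕ} (M : Matrix (Fin m) (Fin m) ℝ) (ω : ℝ)
    (h : (M + ω • 1) ^ m = 0) :
    (Matrix.toEuclideanCLM (𝕜 := ℝ) M + ω • 1) ^ m = 0 := by
  have e : Matrix.toEuclideanCLM (𝕜 := ℝ) M + ω • 1
      = Matrix.toEuclideanCLM (𝕜 := ℝ) (M + ω • 1) := by
    rw [map_add, _root_.map_smul, _root_.map_one]
  rw [e, ← map_pow, h, map_zero]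

lemma exp_decay_of_nilpotent {E : Type*} [NormedAddCommGroup E] [NormedSpace ℝ E]
    [CompleteSpace E] (T : E →L[ℝ] E) (m : ℕ) (hm : 0 < m) (ω : ℝ) (hω : 0 < ω)
    (h : (T + ω • 1) ^ m = 0) :
    ∃ C : ℝ, 1 ≤ C ∧ ∀ t : ℝ, 0 ≤ t →
      ‖NormedSpace.exp (t • T)‖ ≤ C * Real.exp (-(ω / 2 * t)) := by
  set N : E →L[ℝ] E := T + ω • 1 with hN
  set C : ℝ := ∑ k ∈ Finset.range m, (4 * ‖N‖ / ω) ^ k with hC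
  have hC1 : 1 ≤ C := by
    have := Finset.single_le_sum (f := fun k => (4 * ‖N‖ / ω) ^ k)
      (fun i _ => by positivity) (Finset.mem_range.mpr hm)
    simpa using this
  refine ⟨C, hC1, fun t ht => ?_⟩
  have hNk : ∀ k : ℕ, ‖N ^ k‖ ≤ ‖N‖ ^ k := by
    intro k
    cases k with
    | zero => simpa [ContinuousLinearMap.one_def] using ContinuousLinearMap.norm_id_le (E := E)
    | succ k => exact norm_pow_le' N k.succ_pos
  have hsplit : t • T = (-(t * ω)) • (1 : E →L[ℝ] E) + t • N := by
    rw [hN, smul_add, smul_smul, neg_smul, mul_comm]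
    abel
  have hcomm : Commute ((-(t * ω)) • (1 : E →L[ℝ] E)) (t • N) := by
    show _ * _ = _ * _
    rw [smul_one_mul, mul_smul_one]
  have hexp1 : NormedSpace.exp ((-(t * ω)) • (1 : E →L[ℝ] E)) = Real.exp (-(t * ω)) • 1 := by
    rw [← Algebra.algebraMap_eq_smul_one, ← algebraMap_exp_comm, Real.exp_eq_exp_ℝ,
      Algebra.algebraMap_eq_smul_one]
  have hsum : NormedSpace.exp (t • N) = ∑ k ∈ Finset.range m, (t ^ k * (k.factorial : ℝ)⁻¹) • N ^ k := by
    rw [NormedSpace.exp_eq_tsum ℝ]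
    show (∑' (n : ℕ), ((n.factorial : ℝ))⁻¹ • (t • N) ^ n) = _
    rw [tsum_eq_sum (s := Finset.range m)
      (by intro k hk
          have hk' : m ≤ k := by simpa using hk
          have hNz : N ^ k = 0 := by
            rw [show k = m + (k - m) by omega, pow_add, h, zero_mul]
          rw [smul_pow, hNz, smul_zero, smul_zero])]
    apply Finset.sum_congr rfl
    intro k _
    rw [smul_pow, smul_smul, mul_comm]
  have hterm : ∀ k : ℕ, ‖(t ^ k * (k.factorial : ℝ)⁻¹) • N ^ k‖
      ≤ (4 * ‖N‖ / ω) ^ k * Real.exp (ω / 4 * t) := by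
    intro k
    have h1 : ‖(t ^ k * (k.factorial : ℝ)⁻¹) • N ^ k‖ ≤ t ^ k * (k.factorial : ℝ)⁻¹ * ‖N‖ ^ k := by
      have e1 : ‖(t ^ k * (k.factorial : ℝ)⁻¹) • N ^ k‖
          ≤ ‖(t ^ k * (k.factorial : ℝ)⁻¹)‖ * ‖N ^ k‖ :=
        ContinuousLinearMap.opNorm_smul_le _ _
      refine e1.trans ?_
      rw [Real.norm_eq_abs, abs_of_nonneg (by positivity)]
      exact mul_le_mul_of_nonneg_left (hNk k) (by positivity)
    have h2 : (ω / 4 * t) ^ k / (k.factorial : ℝ) ≤ Real.exp (ω / 4 * t) := by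
      refine le_trans ?_ (Real.sum_le_exp_of_nonneg (by positivity) (k + 1))
      exact Finset.single_le_sum (f := fun i => (ω / 4 * t) ^ i / (i.factorial : ℝ))
        (fun i _ => by positivity) (Finset.mem_range.mpr k.lt_succ_self)
    have h3 : t ^ k * (k.factorial : ℝ)⁻¹ ≤ (4 / ω) ^ k * Real.exp (ω / 4 * t) := by
      have ht' : t ^ k = (4 / ω) ^ k * (ω / 4 * t) ^ k := by
        rw [← mul_pow]
        congr 1
        field_simp
      rw [ht', mul_assoc]
      refine mul_le_mul_of_nonneg_left ?_ (by positivity)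
      calc (ω / 4 * t) ^ k * (k.factorial : ℝ)⁻¹ = (ω / 4 * t) ^ k / (k.factorial : ℝ) := by
            ring
        _ ≤ Real.exp (ω / 4 * t) := h2
    calc ‖(t ^ k * (k.factorial : ℝ)⁻¹) • N ^ k‖ ≤ t ^ k * (k.factorial : ℝ)⁻¹ * ‖N‖ ^ k := h1
      _ ≤ (4 / ω) ^ k * Real.exp (ω / 4 * t) * ‖N‖ ^ k :=
          mul_le_mul_of_nonneg_right h3 (by positivity)
      _ = (4 * ‖N‖ / ω) ^ k * Real.exp (ω / 4 * t) := by
          rw [show (4 * ‖N‖ / ω) ^ k = (4 / ω) ^ k * ‖N‖ ^ k by rw [← mul_pow]; ring_nf]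
          ring
  calc ‖NormedSpace.exp (t • T)‖ ≤ Real.exp (-(t * ω)) * ‖NormedSpace.exp (t • N)‖ := by
        rw [hsplit, NormedSpace.exp_add_of_commute hcomm, hexp1, smul_mul_assoc, one_mul]
        refine (ContinuousLinearMap.opNorm_smul_le _ _).trans ?_
        rw [Real.norm_eq_abs, abs_of_pos (Real.exp_pos _)]
    _ ≤ Real.exp (-(t * ω)) * (C * Real.exp (ω / 4 * t)) := by
        refine mul_le_mul_of_nonneg_left ?_ (Real.exp_pos _).le
        calc ‖NormedSpace.exp (t • N)‖ ≤ ∑ k ∈ Finset.range m, ‖(t ^ k * (k.factorial : ℝ)⁻¹) • N ^ k‖ := by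
              rw [hsum]; exact norm_sum_le _ _
          _ ≤ ∑ k ∈ Finset.range m, (4 * ‖N‖ / ω) ^ k * Real.exp (ω / 4 * t) :=
              Finset.sum_le_sum fun k _ => hterm k
          _ = C * Real.exp (ω / 4 * t) := by rw [hC, Finset.sum_mul]
    _ ≤ C * Real.exp (-(ω / 2 * t)) := by
        rw [show Real.exp (-(t * ω)) * (C * Real.exp (ω / 4 * t))
            = C * (Real.exp (-(t * ω)) * Real.exp (ω / 4 * t)) by ring, ← Real.exp_add]
        refine mul_le_mul_of_nonneg_left ?_ (by linarith)
        rw [Real.exp_le_exp]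
        nlinarith

section ODE
variable {E : Type*} [NormedAddCommGroup E] [InnerProductSpace ℝ E]
  [FiniteDimensional ℝ E] [MeasurableSpace E] [BorelSpace E]

lemma ISS_bound (T : E →L[ℝ] E) (C lam R : ℝ) (hlam : 0 < lam) (hC : 0 ≤ C) (hR : 0 ≤ R)
    (hdecay : ∀ t : ℝ, 0 ≤ t → ‖NormedSpace.exp (t • T)‖ ≤ C * Real.exp (-(lam * t)))
    (z : ℝ → E) (u : ℝ → E)
    (hode : ∀ t : ℝ, 0 ≤ t → HasDerivAt z (T (z t) + u t) t)
    (hu : ∀ t : ℝ, 0 ≤ t → ‖u t‖ ≤ R)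
    (t : ℝ) (ht : 0 ≤ t) :
    ‖z t‖ ≤ C * Real.exp (-(lam * t)) * ‖z 0‖ + C * R / lam := by
  set expM : ℝ → E →L[ℝ] E := fun s => NormedSpace.exp (s • T) with hexpM
  have hMcomm : ∀ a b : ℝ, expM a * expM b = expM (a + b) := by
    intro a b
    rw [hexpM]
    simp only
    rw [← NormedSpace.exp_add_of_commute (((Commute.refl T).smul_left a).smul_right b), add_smul]
  have hM0 : expM 0 = 1 := by simp [hexpM, NormedSpace.exp_zero]
  have hMcont : Continuous expM := by
    have : Continuous fun s : ℝ => s • T := continuous_id.smul continuous_const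
    exact (NormedSpace.exp_continuous (𝔸 := E →L[ℝ] E)).comp this
  set g : ℝ → E := fun s => expM (-s) (z s) with hg
  have hgderiv : ∀ s : ℝ, 0 ≤ s → HasDerivAt g (expM (-s) (u s)) s := by
    intro s hs
    have h1 : HasDerivAt (fun r : ℝ => expM (-r)) ((-1 : ℝ) • (T * expM (-s))) s := by
      have h2 : HasDerivAt (fun r : ℝ => NormedSpace.exp (r • T)) (T * NormedSpace.exp ((-s) • T)) (-s) :=
        hasDerivAt_exp_smul_const' T (-s)
      have h3 : HasDerivAt (fun r : ℝ => -r) (-1 : ℝ) s := (hasDerivAt_id s).neg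
      exact h2.scomp s h3
    have h4 := h1.clm_apply (hode s hs)
    have e : ((-1 : ℝ) • (T * expM (-s))) (z s) + expM (-s) (T (z s) + u s)
        = expM (-s) (u s) := by
      have hcommT : T * expM (-s) = expM (-s) * T :=
        (((Commute.refl T).smul_right (-s)).exp_right).eq
      rw [ContinuousLinearMap.smul_apply, hcommT, ContinuousLinearMap.mul_apply, map_add]
      rw [neg_one_smul]
      abel
    rw [e] at h4
    exact h4
  obtain ⟨K, hK⟩ := (isCompact_Icc (a := (0:ℝ)) (b := t)).exists_bound_of_continuousOn
    (f := fun s => expM (-s)) ((hMcont.comp continuous_neg).continuousOn)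
  have hGbd : ∀ s ∈ Set.Icc (0:ℝ) t, ‖expM (-s) (u s)‖ ≤ |K| * R + 1 := by
    intro s hs
    calc ‖expM (-s) (u s)‖ ≤ ‖expM (-s)‖ * ‖u s‖ := ContinuousLinearMap.le_opNorm _ _
      _ ≤ |K| * R :=
          mul_le_mul ((hK s hs).trans (le_abs_self K)) (hu s hs.1) (norm_nonneg _) (abs_nonneg K)
      _ ≤ |K| * R + 1 := by linarith
  have hIoc : Set.uIoc (0:ℝ) t = Set.Ioc 0 t := Set.uIoc_of_le ht
  have hGint : IntervalIntegrable (fun s => expM (-s) (u s)) volume 0 t := by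
    rw [intervalIntegrable_iff]
    apply MeasureTheory.Integrable.mono' (g := fun _ => |K| * R + 1)
      (integrableOn_const (by rw [hIoc]; exact measure_Ioc_lt_top.ne))
    · have hmeas : Measurable (deriv g) := measurable_deriv g
      apply (hmeas.aestronglyMeasurable.restrict).congr
      rw [hIoc]
      filter_upwards [ae_restrict_mem measurableSet_Ioc] with s hs
      exact (hgderiv s hs.1.le).deriv
    · rw [hIoc]
      filter_upwards [ae_restrict_mem measurableSet_Ioc] with s hs
      exact hGbd s ⟨hs.1.le, hs.2⟩
  have hFTC : ∫ s in (0:ℝ)..t, expM (-s) (u s) = g t - g 0 := by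
    apply intervalIntegral.integral_eq_sub_of_hasDerivAt
    · intro x hx
      rw [Set.uIcc_of_le ht] at hx
      exact hgderiv x hx.1
    · exact hGint
  have hg0 : g 0 = z 0 := by
    rw [hg]
    simp only [neg_zero, hM0]
    rfl
  have hrepr : z t = expM t (z 0) + ∫ s in (0:ℝ)..t, expM (t - s) (u s) := by
    have e1 : expM t (g t) = z t := by
      rw [hg]
      calc expM t (expM (-t) (z t)) = (expM t * expM (-t)) (z t) :=
            (ContinuousLinearMap.mul_apply _ _ _).symm
        _ = z t := by rw [hMcomm, add_neg_cancel, hM0, ContinuousLinearMap.one_apply]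
    rw [← e1, show g t = g 0 + ∫ s in (0:ℝ)..t, expM (-s) (u s) by rw [hFTC]; abel, hg0,
      map_add]
    congr 1
    rw [← ContinuousLinearMap.intervalIntegral_comp_comm _ hGint]
    apply intervalIntegral.integral_congr
    intro s _
    show expM t (expM (-s) (u s)) = expM (t - s) (u s)
    calc expM t (expM (-s) (u s)) = (expM t * expM (-s)) (u s) :=
          (ContinuousLinearMap.mul_apply _ _ _).symm
      _ = expM (t - s) (u s) := by rw [hMcomm, ← sub_eq_add_neg]
  have hint2 : ∫ s in (0:ℝ)..t, Real.exp (-(lam * (t - s)))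
      = (1 - Real.exp (-(lam * t))) / lam := by
    have hD : ∀ s ∈ Set.uIcc (0:ℝ) t, HasDerivAt (fun r => Real.exp (-(lam * (t - r))) / lam)
        (Real.exp (-(lam * (t - s)))) s := by
      intro s _
      have h5 : HasDerivAt (fun r : ℝ => -(lam * (t - r))) lam s := by
        have := (((hasDerivAt_const s t).sub (hasDerivAt_id s)).const_mul lam).neg
        exact (by simpa using this : HasDerivAt (-fun y => lam * (t - y)) lam s)
      have h6 := h5.exp.div_const lam
      simpa [mul_div_cancel_right₀ _ (ne_of_gt hlam)] using h6
    rw [intervalIntegral.integral_eq_sub_of_hasDerivAt hD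
      ((Continuous.intervalIntegrable (by fun_prop) 0 t))]
    simp only [sub_self, mul_zero, neg_zero, Real.exp_zero, sub_zero]
    ring
  have hexp1 : Real.exp (-(lam * t)) ≤ 1 := Real.exp_le_one_iff.mpr (by nlinarith)
  calc ‖z t‖ ≤ ‖expM t (z 0)‖ + ‖∫ s in (0:ℝ)..t, expM (t - s) (u s)‖ := by
        rw [hrepr]; exact norm_add_le _ _
    _ ≤ C * Real.exp (-(lam * t)) * ‖z 0‖ + C * R / lam := by
        apply add_le_add
        · calc ‖expM t (z 0)‖ ≤ ‖expM t‖ * ‖z 0‖ := ContinuousLinearMap.le_opNorm _ _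
            _ ≤ C * Real.exp (-(lam * t)) * ‖z 0‖ :=
              mul_le_mul_of_nonneg_right (hdecay t ht) (norm_nonneg _)
        · calc ‖∫ s in (0:ℝ)..t, expM (t - s) (u s)‖
              ≤ |∫ s in (0:ℝ)..t, C * R * Real.exp (-(lam * (t - s)))| := by
                refine (intervalIntegral.norm_integral_le_of_norm_le ht ?_ ?_).trans (le_abs_self _)
                · filter_upwards with s hs
                  calc ‖expM (t - s) (u s)‖ ≤ ‖expM (t - s)‖ * ‖u s‖ :=
                        ContinuousLinearMap.le_opNorm _ _
                    _ ≤ (C * Real.exp (-(lam * (t - s)))) * R :=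
                        mul_le_mul (hdecay _ (by linarith [hs.2])) (hu s hs.1.le)
                          (norm_nonneg _) (by positivity)
                    _ = C * R * Real.exp (-(lam * (t - s))) := by ring
                · exact ((Continuous.intervalIntegrable (by fun_prop) 0 t).const_mul _)
            _ ≤ C * R / lam := by
                rw [intervalIntegral.integral_const_mul, hint2,
                  abs_of_nonneg (mul_nonneg (by positivity)
                    (div_nonneg (by linarith) hlam.le))]
                calc C * R * ((1 - Real.exp (-(lam * t))) / lam) ≤ C * R * (1 / lam) := by
                      refine mul_le_mul_of_nonneg_left ?_ (by positivity)
                      rw [div_le_div_iff₀ hlam hlam]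
                      nlinarith [Real.exp_pos (-(lam * t))]
                  _ = C * R / lam := by ring
end ODE

/-- Lemma 1 of the paper: input-to-state stability of the observation error subsystem
`z̃′ = (A_{n+1} − l·c^⊤)·z̃ + ḋ·b_{n+1} − w·l` with bandwidth-parametrized gain `l`:
`‖z̃(t)‖ ≤ ω_o^n·c₁·‖z̃(0)‖·exp(−c₂ω_o t) + (1/ω_o)·c₃·(r_ḋ + ω_o^{n+1}·c₄·r_w)`. -/
theorem observer_ISS (n : ℕ) (hn : 1 ≤ n) (ωo : ℝ) (hωo : 1 < ωo) :
    ∃ c₁ c₂ c₃ c₄ : ℝ, 0 < c₁ ∧ 0 < c₂ ∧ 0 < c₃ ∧ 0 < c₄ ∧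
      ∀ (rd rw : ℝ), 0 < rd → 0 < rw →
      ∀ (ztil : ℝ → EuclideanSpace ℝ (Fin (n + 1))) (ddot w : ℝ → ℝ),
        (∀ t : ℝ, 0 ≤ t → HasDerivAt ztil
          ((Matrix.toEuclideanLin
              (shiftMat (n + 1) - Matrix.vecMulVec (obsGain (n + 1) ωo) (firstBasis (n + 1))))
              (ztil t)
            + ddot t • (EuclideanSpace.equiv (Fin (n + 1)) ℝ).symm (lastBasis (n + 1))
            - w t • (EuclideanSpace.equiv (Fin (n + 1)) ℝ).symm (obsGain (n + 1) ωo)) t) →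
        (∀ t : ℝ, 0 ≤ t → |ddot t| ≤ rd) →
        (∀ t : ℝ, 0 ≤ t → |w t| ≤ rw) →
        ∀ t : ℝ, 0 ≤ t →
          ‖ztil t‖ ≤ ωo ^ n * c₁ * ‖ztil 0‖ * Real.exp (-(c₂ * ωo * t))
            + (1 / ωo) * c₃ * (rd + ωo ^ (n + 1) * c₄ * rw) := by
  have hm : 0 < n + 1 := Nat.succ_pos n
  have hωpos : (0:ℝ) < ωo := by linarith
  set Mm : Matrix (Fin (n+1)) (Fin (n+1)) ℝ :=
    shiftMat (n+1) - Matrix.vecMulVec (obsGain (n+1) ωo) (firstBasis (n+1)) with hMm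
  set T : EuclideanSpace ℝ (Fin (n+1)) →L[ℝ] EuclideanSpace ℝ (Fin (n+1)) :=
    Matrix.toEuclideanCLM (𝕜 := ℝ) Mm with hT
  have hnil : (T + ωo • 1) ^ (n+1) = 0 := clm_nilpotent Mm ωo (N_nilpotent (n+1) hm ωo)
  obtain ⟨C, hC1, hdecay⟩ := exp_decay_of_nilpotent T (n+1) hm ωo hωpos hnil
  have hC0 : (0:ℝ) < C := lt_of_lt_of_le one_pos hC1
  set lE : EuclideanSpace ℝ (Fin (n+1)) :=
    (EuclideanSpace.equiv (Fin (n+1)) ℝ).symm (obsGain (n+1) ωo) with hlE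
  set bE : EuclideanSpace ℝ (Fin (n+1)) :=
    (EuclideanSpace.equiv (Fin (n+1)) ℝ).symm (lastBasis (n+1)) with hbEdef
  have hbE : ‖bE‖ = 1 := by
    have e : bE = EuclideanSpace.single (⟨n, by omega⟩ : Fin (n+1)) (1:ℝ) := by
      ext i
      rw [EuclideanSpace.single_apply]
      show lastBasis (n+1) i = _
      rw [lastBasis]
      simp only [Nat.add_sub_cancel]
      by_cases h : (i : ℕ) = n
      · rw [if_pos h, if_pos (Fin.ext h)]
      · rw [if_neg h, if_neg (fun hh => h (by rw [hh]))]
    rw [e, EuclideanSpace.norm_single]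
    norm_num
  have hlpos : 0 < ‖lE‖ := by
    rw [norm_pos_iff]
    intro h
    have h0 : lE ⟨0, hm⟩ = ((n+1).choose (0+1) : ℝ) * ωo ^ (0+1) := rfl
    rw [h] at h0
    have h1 : (0:ℝ) = ((n+1).choose 1 : ℝ) * ωo ^ 1 := h0
    rw [Nat.choose_one_right] at h1
    have h2 : (0:ℝ) < ((n+1 : ℕ) : ℝ) * ωo ^ 1 := by positivity
    rw [← h1] at h2
    exact lt_irrefl 0 h2
  refine ⟨C / ωo ^ n, 1/2, 2*C, ‖lE‖ / ωo ^ (n+1),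
    div_pos hC0 (by positivity), by norm_num, by linarith, div_pos hlpos (by positivity), ?_⟩
  intro rd rww hrd hrww ztil ddot w hode hd hw tt htt
  set u : ℝ → EuclideanSpace ℝ (Fin (n+1)) := fun s => ddot s • bE - w s • lE with hu
  have hode' : ∀ s : ℝ, 0 ≤ s → HasDerivAt ztil (T (ztil s) + u s) s := by
    intro s hs
    have e : (Matrix.toEuclideanLin Mm) (ztil s) + ddot s • bE - w s • lE
        = T (ztil s) + u s := by
      have e2 : (Matrix.toEuclideanLin Mm) (ztil s) = T (ztil s) := by
        rw [hT, ← Matrix.coe_toEuclideanCLM_eq_toEuclideanLin]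
        rfl
      rw [e2, hu]
      abel
    have h5 := hode s hs
    rw [e] at h5
    exact h5
  set R : ℝ := rd + ωo ^ (n+1) * (‖lE‖ / ωo ^ (n+1)) * rww with hR
  have hRe : R = rd + ‖lE‖ * rww := by
    rw [hR]
    congr 1
    field_simp
  have hub : ∀ s : ℝ, 0 ≤ s → ‖u s‖ ≤ R := by
    intro s hs
    rw [hRe]
    calc ‖u s‖ ≤ ‖ddot s • bE‖ + ‖w s • lE‖ := norm_sub_le _ _
      _ = |ddot s| * ‖bE‖ + |w s| * ‖lE‖ := by
          rw [norm_smul, norm_smul, Real.norm_eq_abs, Real.norm_eq_abs]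
      _ ≤ rd * 1 + rww * ‖lE‖ := by
          apply add_le_add
          · rw [hbE, mul_one]
            simpa using hd s hs
          · exact mul_le_mul_of_nonneg_right (hw s hs) (norm_nonneg _)
      _ = rd + ‖lE‖ * rww := by ring
  have key := ISS_bound T C (ωo/2) R (by positivity) hC0.le
    (by rw [hRe]; positivity) hdecay ztil u hode' hub tt htt
  have egoal : ωo ^ n * (C / ωo ^ n) * ‖ztil 0‖ * Real.exp (-(1/2 * ωo * tt))
      + (1 / ωo) * (2*C) * R
      = C * Real.exp (-(ωo/2 * tt)) * ‖ztil 0‖ + C * R / (ωo/2) := by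
    rw [show -(1/2 * ωo * tt) = -(ωo/2 * tt) by ring]
    field_simp
  calc ‖ztil tt‖ ≤ C * Real.exp (-(ωo/2 * tt)) * ‖ztil 0‖ + C * R / (ωo/2) := key
    _ = ωo ^ n * (C / ωo ^ n) * ‖ztil 0‖ * Real.exp (-(1/2 * ωo * tt))
        + (1 / ωo) * (2*C) * R := egoal.symm
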